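/- Let q, d ≥ 2 be integers and let x be an integer. Then liminf_{N→∞} γ(N, q, d; 1, 0, 0, 0, x)/N ≥ (φ(d)/(d·q))·⌊q/d⌋, where φ is Euler's totient function; that is, liminf_{N→∞} (1/N)·|{n < N : u_q(n) ≡ −x (mod d)}| ≥ (φ(d)/(d·q))·⌊q/d⌋. -/

import Mathlib

open Filter

/-- `vq q n` is the `q`-adic valuation: `0` if `n = 0`, and otherwise the
largest `k` such that `q ^ k` divides `n`. -/
noncomputable def vq (q n : ℕ) : ℕ := if n = 0 then 0 else sSup {k : ℕ | q ^ k ∣ n}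

/-- `wq q n = ∑_{i=0}^n vq q i`. -/
noncomputable def wq (q n : ℕ) : ℕ := ∑ i ∈ Finset.range (n + 1), vq q i

/-- `uq q n = ∑_{i=0}^n wq q i`. -/
noncomputable def uq (q n : ℕ) : ℕ := ∑ i ∈ Finset.range (n + 1), wq q i

section dev
set_option linter.unusedSectionVars false

variable {q : ℕ} (hq : 2 ≤ q)

include hq

lemma vq_eq_card (n : ℕ) :
    vq q n = ((Finset.Icc 1 n).filter (fun k => q ^ k ∣ n)).card := by
  rcases Nat.eq_zero_or_pos n with h | h
  · subst h; simp [vq]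
  · have hbdd : ∀ k ∈ {k : ℕ | q ^ k ∣ n}, k ≤ n := by
      intro k hk
      have h1 : q ^ k ≤ n := Nat.le_of_dvd h hk
      have h2 : k < q ^ k := Nat.lt_pow_self (n := k) (by omega)
      omega
    have hne : ({k : ℕ | q ^ k ∣ n} : Set ℕ).Nonempty := ⟨0, by simp⟩
    have hbd : BddAbove {k : ℕ | q ^ k ∣ n} := ⟨n, hbdd⟩
    have hmem : sSup {k : ℕ | q ^ k ∣ n} ∈ {k : ℕ | q ^ k ∣ n} := Nat.sSup_mem hne hbd
    set V := sSup {k : ℕ | q ^ k ∣ n} with hV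
    have hfil : (Finset.Icc 1 n).filter (fun k => q ^ k ∣ n) = Finset.Icc 1 V := by
      ext k
      simp only [Finset.mem_filter, Finset.mem_Icc]
      constructor
      · rintro ⟨⟨h1, h2⟩, h3⟩
        exact ⟨h1, le_csSup hbd h3⟩
      · rintro ⟨h1, h2⟩
        have h3 : q ^ k ∣ q ^ V := pow_dvd_pow q h2
        exact ⟨⟨h1, le_trans h2 (hbdd _ hmem)⟩, h3.trans hmem⟩
    rw [vq, if_neg (by omega), hfil, Nat.card_Icc]
    omega

lemma vq_zero_of_not_dvd {n : ℕ} (hn : ¬ q ∣ n) : vq q n = 0 := by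
  have hn0 : n ≠ 0 := by rintro rfl; exact hn (dvd_zero q)
  rw [vq_eq_card hq]
  convert Finset.card_empty
  ext k
  simp only [Finset.mem_filter, Finset.mem_Icc, Finset.notMem_empty, iff_false]
  rintro ⟨⟨h1, h2⟩, h3⟩
  exact hn ((dvd_pow_self q (by omega : k ≠ 0)).trans h3)

lemma wq_eq (n : ℕ) : wq q n = ∑ k ∈ Finset.Icc 1 n, n / q ^ k := by
  have h0 : Finset.range (n+1) = insert 0 (Finset.Icc 1 n) := by
    ext k; simp [Finset.mem_range, Finset.mem_Icc]; omega
  rw [wq, h0, Finset.sum_insert (by simp)]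
  have hv0 : vq q 0 = 0 := by simp [vq]
  rw [hv0, zero_add]
  have hstep : ∀ i ∈ Finset.Icc 1 n, vq q i =
      ∑ k ∈ Finset.Icc 1 n, (if q ^ k ∣ i then 1 else 0) := by
    intro i hi
    simp only [Finset.mem_Icc] at hi
    rw [vq_eq_card hq, ← Finset.card_filter]
    congr 1
    ext k
    simp only [Finset.mem_filter, Finset.mem_Icc]
    constructor
    · rintro ⟨⟨h1, h2⟩, h3⟩; exact ⟨⟨h1, by omega⟩, h3⟩
    · rintro ⟨⟨h1, h2⟩, h3⟩
      have h4 : q ^ k ≤ i := Nat.le_of_dvd (by omega) h3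
      have h5 : k < q ^ k := Nat.lt_pow_self (n := k) (by omega : 1 < q)
      exact ⟨⟨h1, by omega⟩, h3⟩
  rw [Finset.sum_congr rfl hstep, Finset.sum_comm]
  apply Finset.sum_congr rfl
  intro k hk
  rw [← Finset.card_filter]
  have hIcc : Finset.Icc 1 n = Finset.Ioc 0 n := by ext a; simp [Finset.mem_Icc, Finset.mem_Ioc]; omega
  rw [hIcc, Nat.Ioc_filter_dvd_card_eq_div]

lemma wq_eq_of_le {n K : ℕ} (hK : n ≤ K) : wq q n = ∑ k ∈ Finset.Icc 1 K, n / q ^ k := by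
  rw [wq_eq hq]
  apply Finset.sum_subset (Finset.Icc_subset_Icc_right hK)
  intro k hk hk2
  simp only [Finset.mem_Icc] at hk hk2
  apply Nat.div_eq_of_lt
  have h5 : n < q ^ n := Nat.lt_pow_self (n := n) (by omega : 1 < q)
  calc n < q ^ n := h5
  _ ≤ q ^ k := Nat.pow_le_pow_right (by omega) (by omega)

lemma wq_succ (n : ℕ) : wq q (n+1) = wq q n + vq q (n+1) := Finset.sum_range_succ _ _

lemma uq_succ (n : ℕ) : uq q (n+1) = uq q n + wq q (n+1) := Finset.sum_range_succ _ _

lemma wq_block {m j : ℕ} (hj : j < q) : wq q (q * m + j) = wq q (q * m) := by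
  induction j with
  | zero => rfl
  | succ j ih =>
    have hj' : j < q := by omega
    rw [show q * m + (j+1) = (q * m + j) + 1 by ring, wq_succ hq, ih hj',
      vq_zero_of_not_dvd hq, add_zero]
    rw [show q * m + j + 1 = q * m + (j + 1) by ring]
    intro hdvd
    have := (Nat.dvd_add_right (Dvd.intro m rfl)).mp hdvd
    have := Nat.le_of_dvd (by omega) this
    omega

lemma uq_block {m j : ℕ} (hj : j < q) :
    uq q (q * m + j) = uq q (q * m) + j * wq q (q * m) := by
  induction j with
  | zero => simp
  | succ j ih =>
    have hj' : j < q := by omega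
    rw [show q * m + (j+1) = (q * m + j) + 1 by ring, uq_succ hq, ih hj',
      show q * m + j + 1 = q * m + (j + 1) by ring, wq_block hq hj]
    ring

lemma adiv_stable {m K K' : ℕ} (hm : m < q ^ K) (hK : K ≤ K') :
    ∑ j ∈ Finset.range K', m / q ^ j = ∑ j ∈ Finset.range K, m / q ^ j := by
  symm
  apply Finset.sum_subset (by intro j hj; simp only [Finset.mem_range] at *; omega)
  intro j hj hj2
  simp only [Finset.mem_range, not_lt] at hj hj2
  exact Nat.div_eq_of_lt (lt_of_lt_of_le hm (Nat.pow_le_pow_right (by omega) hj2))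

lemma wq_qmul {m K : ℕ} (hm : m < q ^ K) :
    wq q (q * m) = ∑ j ∈ Finset.range K, m / q ^ j := by
  have h1 : wq q (q * m) = ∑ k ∈ Finset.Icc 1 (q * m), (q * m) / q ^ k := wq_eq hq _
  have h2 : ∀ k, (q * m) / q ^ (1 + k) = m / q ^ k := by
    intro k
    rw [pow_add, pow_one, Nat.mul_div_mul_left _ _ (by omega : 0 < q)]
  have h3 : ∑ k ∈ Finset.Icc 1 (q * m), (q * m) / q ^ k
      = ∑ k ∈ Finset.range (q * m), m / q ^ k := by
    rw [show Finset.Icc 1 (q*m) = Finset.Ico 1 (q*m+1) by rw [Finset.Ico_add_one_right_eq_Icc],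
      Finset.sum_Ico_eq_sum_range]
    simp only [Nat.add_sub_cancel]
    exact Finset.sum_congr rfl (fun k _ => h2 k)
  rw [h1, h3]
  have hm2 : m < q ^ (q * m) := by
    rcases Nat.eq_zero_or_pos m with h | h
    · subst h; simpa using Nat.one_pos
    · calc m < q ^ m := Nat.lt_pow_self (n := m) (by omega : 1 < q)
        _ ≤ q ^ (q * m) := Nat.pow_le_pow_right (by omega) (by nlinarith)
  have e1 := adiv_stable hq hm2 (le_max_right K (q*m))
  have e2 := adiv_stable hq hm (le_max_left K (q*m))
  rw [← e1, e2]

def dig (q i m : ℕ) : ℕ := m / q ^ i % q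

omit hq in
lemma dig_zero' (m : ℕ) : dig q 0 m = m % q := by simp [dig]

omit hq in
lemma dig_succ (i m : ℕ) : dig q (i+1) m = dig q i (m / q) := by
  simp only [dig]
  rw [Nat.div_div_eq_div_mul, ← pow_succ']

lemma sum_dig_mul_pow {K : ℕ} : ∀ {m : ℕ}, m < q ^ K →
    ∑ i ∈ Finset.range K, dig q i m * q ^ i = m := by
  induction K with
  | zero =>
    intro m hm
    have : m = 0 := by simpa using hm
    subst this; simp
  | succ K ih =>
    intro m hm
    rw [Finset.sum_range_succ']
    have h1 : ∀ i, dig q (i+1) m = dig q i (m / q) := fun i => dig_succ i m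
    have h2 : m / q < q ^ K := by
      rw [Nat.div_lt_iff_lt_mul (by omega : 0 < q)]
      rw [pow_succ] at hm; exact hm
    calc ∑ i ∈ Finset.range K, dig q (i+1) m * q ^ (i+1) + dig q 0 m * q ^ 0
        = q * (∑ i ∈ Finset.range K, dig q i (m / q) * q ^ i) + m % q := by
          rw [Finset.mul_sum]
          simp only [dig_zero', pow_zero, mul_one]
          congr 1
          apply Finset.sum_congr rfl
          intro i _
          rw [h1 i, pow_succ]
          ring
      _ = m := by rw [ih h2]; have := Nat.mod_add_div m q; omega

def sig (q i : ℕ) : ℕ := ∑ t ∈ Finset.range (i+1), q ^ t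

omit hq in
lemma sig_succ (i : ℕ) : sig q (i+1) = sig q i + q ^ (i+1) := Finset.sum_range_succ _ _

lemma sum_div_eq_digits {K : ℕ} : ∀ {m : ℕ}, m < q ^ K →
    ∑ j ∈ Finset.range K, m / q ^ j = ∑ i ∈ Finset.range K, dig q i m * sig q i := by
  induction K with
  | zero => intro m hm; simp
  | succ K ih =>
    intro m hm
    have h2 : m / q < q ^ K := by
      rw [Nat.div_lt_iff_lt_mul (by omega : 0 < q)]
      rw [pow_succ] at hm; exact hm
    have hL : ∑ j ∈ Finset.range (K+1), m / q ^ j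
        = m + ∑ j ∈ Finset.range K, (m / q) / q ^ j := by
      rw [Finset.sum_range_succ']
      simp only [pow_zero, Nat.div_one]
      rw [add_comm]
      congr 1
      apply Finset.sum_congr rfl
      intro j _
      rw [Nat.div_div_eq_div_mul, ← pow_succ']
    rw [hL, ih h2]
    rw [Finset.sum_range_succ' (fun i => dig q i m * sig q i)]
    simp only [dig_zero', pow_zero]
    have h3 : ∀ i, dig q (i+1) m = dig q i (m / q) := fun i => dig_succ i m
    have hexp : ∑ i ∈ Finset.range K, dig q (i+1) m * sig q (i+1)
        = ∑ i ∈ Finset.range K, dig q i (m / q) * sig q i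
          + ∑ i ∈ Finset.range K, dig q i (m / q) * q ^ (i+1) := by
      rw [← Finset.sum_add_distrib]
      apply Finset.sum_congr rfl
      intro i _
      rw [h3 i, sig_succ]
      ring
    rw [hexp]
    have hbase : ∑ i ∈ Finset.range K, dig q i (m / q) * q ^ (i+1)
        = q * (m / q) := by
      calc ∑ i ∈ Finset.range K, dig q i (m / q) * q ^ (i+1)
          = q * ∑ i ∈ Finset.range K, dig q i (m / q) * q ^ i := by
            rw [Finset.mul_sum]
            apply Finset.sum_congr rfl
            intro i _
            rw [pow_succ]
            ring
        _ = q * (m / q) := by rw [sum_dig_mul_pow hq h2]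
    have hsig0 : sig q 0 = 1 := by simp [sig]
    rw [hbase, hsig0]
    have := Nat.mod_add_div m q
    omega

omit hq in
lemma sig_succ' (i : ℕ) : sig q (i+1) = q * sig q i + 1 := by
  have h := Finset.sum_range_succ' (fun t => q ^ t) (i+1)
  simp only [pow_zero] at h
  rw [sig, h]
  congr 1
  rw [sig, Finset.mul_sum]
  apply Finset.sum_congr rfl
  intro t _
  rw [pow_succ]
  ring

end dev

section dev2

set_option linter.unusedSectionVars false

variable {q d : ℕ} (hq : 2 ≤ q) (hd : 2 ≤ d)

include hq hd

omit hq hd in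
lemma neZero_d (hd : 2 ≤ d) : NeZero d := ⟨by omega⟩

noncomputable def tau (q d i : ℕ) : ZMod d := ((sig q i : ℕ) : ZMod d)

noncomputable def phiSum (q d s K m : ℕ) : ZMod d :=
  ∑ j ∈ Finset.range K, (dig q j m : ZMod d) * tau q d (s + j)

omit hq hd in
lemma tau_succ (i : ℕ) : tau q d (i+1) = q * tau q d i + 1 := by
  unfold tau
  rw [sig_succ']
  push_cast
  ring

lemma phiSum_spec {m K : ℕ} (hm : m < q ^ K) :
    ((wq q (q * m) : ℕ) : ZMod d) = phiSum q d 0 K m := by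
  rw [wq_qmul hq hm, sum_div_eq_digits hq hm]
  unfold phiSum tau
  push_cast
  apply Finset.sum_congr rfl
  intro j _
  rw [zero_add]

omit hq hd in
lemma dig_add_high {i K m h : ℕ} (hq0 : 0 < q) (hiK : i < K) :
    dig q i (m + q ^ K * h) = dig q i m := by
  unfold dig
  obtain ⟨j, rfl⟩ : ∃ j, K = i + 1 + j := ⟨K - i - 1, by omega⟩
  have hfact : q ^ (i + 1 + j) * h = q ^ i * (q * (q ^ j * h)) := by
    rw [pow_add, pow_add, pow_one]
    ring
  rw [hfact, Nat.add_mul_div_left _ _ (pow_pos hq0 i),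
    Nat.add_mul_mod_self_left]

omit hq hd in
lemma dig_high {j K m h : ℕ} (hq0 : 0 < q) (hm : m < q ^ K) :
    dig q (K + j) (m + q ^ K * h) = dig q j h := by
  unfold dig
  rw [pow_add, ← Nat.div_div_eq_div_mul,
    Nat.add_mul_div_left _ _ (pow_pos hq0 K),
    Nat.div_eq_of_lt hm, zero_add]

omit hd in
lemma phiSum_split {s K L m h : ℕ} (hm : m < q ^ K) :
    phiSum q d s (K + L) (m + q ^ K * h)
      = phiSum q d s K m + phiSum q d (s + K) L h := by
  unfold phiSum
  rw [Finset.sum_range_add]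
  congr 1
  · apply Finset.sum_congr rfl
    intro j hj
    simp only [Finset.mem_range] at hj
    rw [dig_add_high (by omega) hj]
  · apply Finset.sum_congr rfl
    intro j _
    rw [dig_high (by omega) hm, add_assoc]

omit hq hd in
lemma filter_mul_card (A : ℕ) (p : ℕ → Prop) [DecidablePred p] :
    ∀ B : ℕ, ((Finset.range (A * B)).filter p).card
      = ∑ t ∈ Finset.range B, ((Finset.range A).filter (fun s => p (A * t + s))).card := by
  intro B
  induction B with
  | zero => simp
  | succ B ih =>
    have hdisj : Disjoint ((Finset.range (A * B)).filter p)
        (((Finset.range A).map (addLeftEmbedding (A * B))).filter p) := by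
      apply Finset.disjoint_filter_filter
      rw [Finset.disjoint_left]
      intro a ha hb
      simp only [Finset.mem_range] at ha
      simp only [Finset.mem_map, Finset.mem_range, addLeftEmbedding_apply] at hb
      obtain ⟨b, hb1, rfl⟩ := hb
      omega
    rw [Nat.mul_succ, Finset.range_add, Finset.filter_union,
      Finset.card_union_of_disjoint hdisj, Finset.filter_map, Finset.card_map,
      Finset.sum_range_succ, ← ih]
    congr 1

variable (q d) in
noncomputable def cnt (s K : ℕ) (r : ZMod d) : ℕ :=
  ((Finset.range (q ^ K)).filter (fun m => phiSum q d s K m = r)).card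

omit hq in
lemma cnt_total [NeZero d] (s K : ℕ) :
    ∑ r ∈ Finset.univ, cnt q d s K r = q ^ K := by
  rw [← Finset.card_range (q ^ K)]
  exact (Finset.card_eq_sum_card_fiberwise (fun m _ => Finset.mem_univ _)).symm

omit hd in
lemma cnt_split (s K L : ℕ) (r : ZMod d) :
    cnt q d s (K + L) r
      = ∑ h ∈ Finset.range (q ^ L), cnt q d s K (r - phiSum q d (s + K) L h) := by
  unfold cnt
  rw [pow_add]
  rw [filter_mul_card (q ^ K) _ (q ^ L)]
  apply Finset.sum_congr rfl
  intro h _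
  congr 1
  apply Finset.filter_congr
  intro m hm
  simp only [Finset.mem_range] at hm
  rw [show q ^ K * h + m = m + q ^ K * h by ring, phiSum_split hq hm]
  constructor
  · intro he; rw [← he]; ring
  · intro he; rw [he]; ring

omit hd in
lemma phiSum_zero_arg (s K : ℕ) : phiSum q d s K 0 = 0 := by
  simp [phiSum, dig]

omit hd in
lemma phiSum_pad {s L L' h : ℕ} (hh : h < q ^ L) (hLL : L ≤ L') :
    phiSum q d s L' h = phiSum q d s L h := by
  obtain ⟨E, rfl⟩ : ∃ E, L' = L + E := ⟨L' - L, by omega⟩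
  have hsplit := phiSum_split (d := d) (s := s) (L := E) (h := 0) hq hh
  rw [mul_zero, add_zero] at hsplit
  rw [hsplit, phiSum_zero_arg hq, add_zero]

omit hd in
lemma phiSum_one {s L : ℕ} (hL : 1 ≤ L) : phiSum q d s L 1 = tau q d s := by
  unfold phiSum
  rw [Finset.sum_eq_single 0]
  · have h1 : dig q 0 1 = 1 := by
      simp only [dig, pow_zero, Nat.div_one]
      exact Nat.mod_eq_of_lt (by omega)
    rw [h1, add_zero]
    push_cast
    ring
  · intro j hj hj0
    have h1 : dig q j 1 = 0 := by
      simp only [dig]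
      rw [Nat.div_eq_of_lt (Nat.one_lt_pow hj0 (by omega))]
      simp
    rw [h1]
    push_cast
    ring
  · intro h0
    exact absurd (Finset.mem_range.mpr (by omega)) h0

omit hd in
lemma phiSum_q {s L : ℕ} (hL : 2 ≤ L) : phiSum q d s L q = tau q d (s+1) := by
  unfold phiSum
  rw [Finset.sum_eq_single 1]
  · have h1 : dig q 1 q = 1 := by
      simp only [dig, pow_one]
      rw [Nat.div_self (by omega)]
      exact Nat.mod_eq_of_lt (by omega)
    rw [h1]
    push_cast
    ring
  · intro j hj hj0
    have h1 : dig q j q = 0 := by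
      rcases Nat.eq_zero_or_pos j with rfl | hj1
      · simp [dig]
      · have hj2 : 2 ≤ j := by omega
        simp only [dig]
        rw [Nat.div_eq_of_lt]
        · simp
        · calc q < q ^ 2 := by nlinarith
            _ ≤ q ^ j := Nat.pow_le_pow_right (by omega) hj2
    rw [h1]
    push_cast
    ring
  · intro h0
    exact absurd (Finset.mem_range.mpr (by omega)) h0

lemma tau_exists_period [NeZero d] :
    ∃ a P : ℕ, 0 < P ∧ ∀ s, a ≤ s → tau q d (s + P) = tau q d s := by
  obtain ⟨i, hi, j, hj, hne, heq⟩ := Finset.exists_ne_map_eq_of_card_lt_of_maps_to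
    (s := Finset.range (d+1)) (t := (Finset.univ : Finset (ZMod d)))
    (by rw [Finset.card_range, Finset.card_univ, ZMod.card]; omega)
    (fun i _ => Finset.mem_univ (tau q d i))
  simp only [Finset.mem_range] at hi hj
  have main : ∀ i j : ℕ, i < j → tau q d i = tau q d j →
      ∃ a P : ℕ, 0 < P ∧ ∀ s, a ≤ s → tau q d (s + P) = tau q d s := by
    intro i j hij heq
    refine ⟨i, j - i, by omega, ?_⟩
    have key : ∀ k, tau q d (i + (j - i) + k) = tau q d (i + k) := by
      intro k
      induction k with
      | zero => simpa [show i + (j - i) = j by omega] using heq.symm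
      | succ k ih =>
        rw [show i + (j-i) + (k+1) = (i + (j-i) + k) + 1 by ring, tau_succ,
          ih, show i + (k+1) = (i + k) + 1 by ring, tau_succ]
    intro s hs
    have hk := key (s - i)
    rw [show i + (j - i) + (s - i) = s + (j - i) by omega,
      show i + (s - i) = s by omega] at hk
    exact hk
  rcases Nat.lt_trichotomy i j with h | h | h
  · exact main i j h heq
  · exact absurd h hne
  · exact main j i h heq.symm

lemma support_ab [NeZero d] {a P : ℕ} (hP : 0 < P)
    (hper : ∀ s, a ≤ s → tau q d (s + P) = tau q d s) :
    ∀ n A B s, A + B = n → a ≤ s →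
      ∃ h, h < q ^ (2*P*n) ∧
        phiSum q d s (2*P*n) h = A • tau q d s + B • tau q d (s+1) := by
  have hper2 : ∀ s, a ≤ s → tau q d (s + 2*P) = tau q d s := by
    intro s hs
    rw [show s + 2*P = (s + P) + P by ring, hper _ (by omega), hper _ hs]
  intro n
  induction n with
  | zero =>
    intro A B s hAB hs
    have hA : A = 0 := by omega
    have hB : B = 0 := by omega
    subst hA; subst hB
    exact ⟨0, by simp, by simp [phiSum_zero_arg hq]⟩
  | succ n ih =>
    intro A B s hAB hs
    have hq2P : (1:ℕ) < q ^ (2*P) := Nat.one_lt_pow (by omega) (by omega)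
    have hqlt : q < q ^ (2*P) := by
      calc q < q ^ 2 := by nlinarith
        _ ≤ q ^ (2*P) := Nat.pow_le_pow_right (by omega) (by omega)
    rcases Nat.eq_zero_or_pos A with hA | hA
    · -- B = B' + 1
      subst hA
      obtain ⟨B', rfl⟩ : ∃ B', B = B' + 1 := ⟨B - 1, by omega⟩
      obtain ⟨h₂, hh₂, hval₂⟩ := ih 0 B' (s + 2*P) (by omega) (by omega)
      refine ⟨q + q ^ (2*P) * h₂, ?_, ?_⟩
      · calc q + q ^ (2*P) * h₂ < q ^ (2*P) + q ^ (2*P) * h₂ := by omega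
          _ = q ^ (2*P) * (h₂ + 1) := by ring
          _ ≤ q ^ (2*P) * q ^ (2*P*n) := by
              apply Nat.mul_le_mul_left
              omega
          _ = q ^ (2*P*(n+1)) := by rw [← pow_add]; ring_nf
      · rw [show 2*P*(n+1) = 2*P + 2*P*n by ring, phiSum_split hq hqlt,
          phiSum_q hq (by omega), hval₂]
        rw [show s + 2*P + 1 = (s+1) + 2*P by ring, hper2 (s+1) (by omega),
          hper2 s hs, succ_nsmul]
        abel
    · -- A = A' + 1
      obtain ⟨A', rfl⟩ : ∃ A', A = A' + 1 := ⟨A - 1, by omega⟩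
      obtain ⟨h₂, hh₂, hval₂⟩ := ih A' B (s + 2*P) (by omega) (by omega)
      refine ⟨1 + q ^ (2*P) * h₂, ?_, ?_⟩
      · calc 1 + q ^ (2*P) * h₂ < q ^ (2*P) + q ^ (2*P) * h₂ := by omega
          _ = q ^ (2*P) * (h₂ + 1) := by ring
          _ ≤ q ^ (2*P) * q ^ (2*P*n) := by
              apply Nat.mul_le_mul_left
              omega
          _ = q ^ (2*P*(n+1)) := by rw [← pow_add]; ring_nf
      · rw [show 2*P*(n+1) = 2*P + 2*P*n by ring, phiSum_split hq hq2P,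
          phiSum_one hq (by omega), hval₂]
        rw [show s + 2*P + 1 = (s+1) + 2*P by ring, hper2 (s+1) (by omega),
          hper2 s hs, succ_nsmul]
        abel

lemma full_support [NeZero d] {a P : ℕ} (hP : 0 < P)
    (hper : ∀ s, a ≤ s → tau q d (s + P) = tau q d s) :
    ∀ t : ZMod d, ∀ s, a ≤ s →
      ∃ h, h < q ^ (2*P*(2*d)) ∧ phiSum q d s (2*P*(2*d)) h = t := by
  intro t s hs
  set A := ((- (q : ZMod d)) * t).val with hA
  set B := t.val with hB
  have hAd : A < d := ZMod.val_lt _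
  have hBd : B < d := ZMod.val_lt _
  obtain ⟨h, hh, hval⟩ := support_ab hq hd hP hper (A + B) A B s rfl hs
  have hle : 2*P*(A+B) ≤ 2*P*(2*d) := by
    apply Nat.mul_le_mul_left
    omega
  refine ⟨h, lt_of_lt_of_le hh (Nat.pow_le_pow_right (by omega) hle), ?_⟩
  rw [phiSum_pad hq hh hle, hval]
  have hAc : ((A : ℕ) : ZMod d) = (- (q : ZMod d)) * t := by
    rw [hA, ZMod.natCast_val, ZMod.cast_id]
  have hBc : ((B : ℕ) : ZMod d) = t := by
    rw [hB, ZMod.natCast_val, ZMod.cast_id]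
  rw [nsmul_eq_mul, nsmul_eq_mul, hAc, hBc, tau_succ]
  ring

end dev2

section dev3

set_option linter.unusedSectionVars false

variable {q d : ℕ} (hq : 2 ≤ q) (hd : 2 ≤ d) [NeZero d]

include hq hd

lemma d_le_pow {P : ℕ} (hP : 0 < P) : d ≤ q ^ (2*P*(2*d)) := by
  have h1 : d ≤ 2*P*(2*d) := by nlinarith
  have h2 : 2*P*(2*d) < 2 ^ (2*P*(2*d)) := Nat.lt_pow_self (by omega)
  have h3 : 2 ^ (2*P*(2*d)) ≤ q ^ (2*P*(2*d)) := Nat.pow_le_pow_left (by omega) _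
  omega

lemma cnt_window_ge {a P : ℕ} (hP : 0 < P)
    (hper : ∀ s, a ≤ s → tau q d (s + P) = tau q d s) :
    ∀ b : ℕ, ∀ s r, a ≤ s →
      ((q : ℝ) ^ (2*P*(2*d)*b) - ((q : ℝ) ^ (2*P*(2*d)) - d) ^ b) / d
        ≤ (cnt q d s (2*P*(2*d)*b) r : ℝ) := by
  have hd0 : (0:ℝ) < d := by positivity
  set L := 2*P*(2*d) with hL
  have hdL : d ≤ q ^ L := d_le_pow hq hd hP
  intro b
  induction b with
  | zero =>
    intro s r hs
    simp only [Nat.mul_zero, pow_zero]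
    rw [sub_self, zero_div]
    positivity
  | succ b ih =>
    intro s r hs
    rw [show L*(b+1) = L*b + L by ring, cnt_split hq]
    set c : ℕ → ZMod d := fun h => phiSum q d (s + L*b) L h with hc
    have hfs : ∀ t : ZMod d, ∃ h, h < q ^ L ∧ c h = t := fun t =>
      full_support hq hd hP hper t (s + L*b) (by omega)
    choose ι hι1 hι2 using hfs
    have hinj : Function.Injective ι := fun t t' h => by rw [← hι2 t, ← hι2 t', h]
    set img := Finset.image ι Finset.univ with himg
    have hsub : img ⊆ Finset.range (q ^ L) := by
      intro h hmem
      rw [himg, Finset.mem_image] at hmem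
      obtain ⟨t, _, rfl⟩ := hmem
      exact Finset.mem_range.mpr (hι1 t)
    have hcast : ((∑ h ∈ Finset.range (q ^ L), cnt q d s (L*b) (r - c h) : ℕ) : ℝ)
        = ∑ h ∈ Finset.range (q ^ L), (cnt q d s (L*b) (r - c h) : ℝ) := by
      push_cast; ring
    rw [hcast]
    rw [← Finset.sum_sdiff hsub]
    have himgsum : ∑ h ∈ img, (cnt q d s (L*b) (r - c h) : ℝ) = (q:ℝ) ^ (L*b) := by
      rw [himg, Finset.sum_image (fun x _ y _ hxy => hinj hxy)]
      rw [Finset.sum_congr rfl (fun t _ => by rw [hι2 t])]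
      have hbij := Fintype.sum_equiv (Equiv.subLeft r)
        (fun t => (cnt q d s (L*b) (r - t) : ℝ))
        (fun t => (cnt q d s (L*b) t : ℝ)) (fun t => rfl)
      rw [hbij]
      rw [← Nat.cast_sum]
      rw [cnt_total (q := q) hd s (L*b)]
      push_cast; ring
    have hsdiffcard : (Finset.range (q ^ L) \ img).card = q ^ L - d := by
      rw [Finset.card_sdiff_of_subset hsub, himg,
        Finset.card_image_of_injective _ hinj, Finset.card_univ, ZMod.card]
      rw [Finset.card_range]
    have hsdiffsum : ((q:ℝ) ^ L - d) * (((q:ℝ) ^ (L*b) - ((q:ℝ) ^ L - d) ^ b) / d)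
        ≤ ∑ h ∈ Finset.range (q ^ L) \ img, (cnt q d s (L*b) (r - c h) : ℝ) := by
      have h1 : ∀ h ∈ Finset.range (q ^ L) \ img,
          ((q:ℝ) ^ (L*b) - ((q:ℝ) ^ L - d) ^ b) / d ≤ (cnt q d s (L*b) (r - c h) : ℝ) :=
        fun h _ => ih s (r - c h) hs
      calc ((q:ℝ) ^ L - d) * (((q:ℝ) ^ (L*b) - ((q:ℝ) ^ L - d) ^ b) / d)
          = ∑ _h ∈ Finset.range (q ^ L) \ img,
              (((q:ℝ) ^ (L*b) - ((q:ℝ) ^ L - d) ^ b) / d) := by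
            rw [Finset.sum_const, hsdiffcard, nsmul_eq_mul]
            congr 1
            push_cast [Nat.cast_sub hdL]
            ring
        _ ≤ _ := Finset.sum_le_sum h1
    have key : ((q:ℝ) ^ (L*b+L) - ((q:ℝ) ^ L - d) ^ (b+1)) / d
        = (q:ℝ) ^ (L*b) + ((q:ℝ) ^ L - d) * (((q:ℝ) ^ (L*b) - ((q:ℝ) ^ L - d) ^ b) / d) := by
      field_simp
      rw [pow_add, pow_succ]
      ring
    rw [key]
    linarith [hsdiffsum, himgsum.ge, himgsum.le]

lemma cnt_full_ge {a P : ℕ} (hP : 0 < P)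
    (hper : ∀ s, a ≤ s → tau q d (s + P) = tau q d s) (b : ℕ) (r : ZMod d) :
    (q:ℝ) ^ a * (((q : ℝ) ^ (2*P*(2*d)*b) - ((q : ℝ) ^ (2*P*(2*d)) - d) ^ b) / d)
      ≤ (cnt q d 0 (a + 2*P*(2*d)*b) r : ℝ) := by
  set L := 2*P*(2*d) with hL
  set Eb : ℝ := ((q : ℝ) ^ (L*b) - ((q : ℝ) ^ L - d) ^ b) / d with hEb
  rw [cnt_split hq, Nat.cast_sum]
  simp only [zero_add]
  have hgrp := Finset.sum_fiberwise_of_maps_to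
    (s := Finset.range (q ^ (L*b))) (t := (Finset.univ : Finset (ZMod d)))
    (g := fun h => phiSum q d a (L*b) h)
    (fun i _ => Finset.mem_univ _)
    (fun h => (cnt q d 0 a (r - phiSum q d a (L*b) h) : ℝ))
  rw [← hgrp]
  have hfib : ∀ j : ZMod d,
      ∑ i ∈ (Finset.range (q ^ (L*b))).filter (fun i => phiSum q d a (L*b) i = j),
        (cnt q d 0 a (r - phiSum q d a (L*b) i) : ℝ)
      = (cnt q d a (L*b) j : ℝ) * (cnt q d 0 a (r - j) : ℝ) := by
    intro j
    have hcongr : ∀ i ∈ (Finset.range (q ^ (L*b))).filter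
        (fun i => phiSum q d a (L*b) i = j),
        (cnt q d 0 a (r - phiSum q d a (L*b) i) : ℝ) = (cnt q d 0 a (r - j) : ℝ) := by
      intro i hi
      simp only [Finset.mem_filter] at hi
      rw [hi.2]
    rw [Finset.sum_congr rfl hcongr, Finset.sum_const, nsmul_eq_mul]
    rfl
  rw [Finset.sum_congr rfl (fun j _ => hfib j)]
  have hq0 : (0:ℝ) ≤ (q:ℝ) := by positivity
  have h1 : ∀ j ∈ (Finset.univ : Finset (ZMod d)),
      Eb * (cnt q d 0 a (r - j) : ℝ)
        ≤ (cnt q d a (L*b) j : ℝ) * (cnt q d 0 a (r - j) : ℝ) := by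
    intro j _
    exact mul_le_mul_of_nonneg_right (cnt_window_ge hq hd hP hper b a j le_rfl)
      (by positivity)
  have h2 : (q:ℝ) ^ a * Eb = ∑ j : ZMod d, Eb * (cnt q d 0 a (r - j) : ℝ) := by
    rw [← Finset.mul_sum]
    have hbij := Fintype.sum_equiv (Equiv.subLeft r)
      (fun t => (cnt q d 0 a (r - t) : ℝ))
      (fun t => (cnt q d 0 a t : ℝ)) (fun t => rfl)
    rw [hbij, ← Nat.cast_sum, cnt_total (q := q) hd 0 a]
    push_cast
    ring
  rw [h2]
  exact Finset.sum_le_sum h1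

end dev3

section dev4

set_option linter.unusedSectionVars false

open scoped Classical

variable {q d : ℕ} (hq : 2 ≤ q) (hd : 2 ≤ d) [NeZero d]

include hq hd

omit hq in
lemma card_isUnit :
    ((Finset.univ : Finset (ZMod d)).filter (fun ρ => IsUnit ρ)).card = Nat.totient d := by
  have e : {x : ZMod d // IsUnit x} ≃ (ZMod d)ˣ :=
    { toFun := fun x => x.2.unit
      invFun := fun u => ⟨u, u.isUnit⟩
      left_inv := fun x => Subtype.ext x.2.unit_spec
      right_inv := fun u => Units.ext u.isUnit.unit_spec }
  rw [← Fintype.card_subtype, Fintype.card_congr e, ZMod.card_units_eq_totient d]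

omit hq in
lemma card_units_shift (C : ZMod d) :
    ((Finset.univ : Finset (ZMod d)).filter (fun ρ => IsUnit (ρ + C))).card
      = Nat.totient d := by
  rw [← card_isUnit hd]
  apply Finset.card_nbij' (fun ρ => ρ + C) (fun ρ => ρ - C)
  · intro a ha
    simp only [Finset.coe_filter, Finset.mem_filter, Finset.mem_univ, true_and, Set.mem_setOf_eq] at ha ⊢
    exact ha
  · intro a ha
    simp only [Finset.coe_filter, Finset.mem_filter, Finset.mem_univ, true_and, Set.mem_setOf_eq] at ha ⊢
    simpa using ha
  · intro a _; ring
  · intro a _; ring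

lemma card_j_ge (β : ZMod d) :
    q / d ≤ ((Finset.range q).filter (fun j => ((j:ℕ) : ZMod d) = β)).card := by
  have hd0 : 0 < d := by omega
  have hv : β.val < d := ZMod.val_lt β
  have hqd : d * (q / d) ≤ q := Nat.mul_div_le q d
  rw [← Finset.card_range (q / d)]
  apply Finset.card_le_card_of_injOn (fun i => β.val + d * i)
  · intro i hi
    simp only [Finset.coe_range, Set.mem_Iio] at hi
    have hmul : d * (i + 1) ≤ d * (q / d) := Nat.mul_le_mul_left d (by omega)
    simp only [Finset.coe_filter, Finset.mem_filter, Finset.mem_range, Set.mem_setOf_eq]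
    constructor
    · nlinarith
    · push_cast
      rw [ZMod.natCast_val, ZMod.cast_id, ZMod.natCast_self]
      ring
  · intro i _ j _ hij
    simp only at hij
    have : d * i = d * j := by omega
    exact Nat.eq_of_mul_eq_mul_left hd0 this

lemma block_count (x : ℤ) {m : ℕ} (hW : IsUnit ((wq q (q * m) : ℕ) : ZMod d)) :
    q / d ≤ ((Finset.range q).filter
      (fun j => ((uq q (q * m + j) : ℤ) + x) % (d : ℤ) = 0)).card := by
  set W : ZMod d := ((wq q (q * m) : ℕ) : ZMod d) with hWdef
  set u0 : ZMod d := ((uq q (q * m) : ℕ) : ZMod d) with hu0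
  set ξ : ZMod d := ((x : ℤ) : ZMod d) with hξ
  set β : ZMod d := (-(u0 + ξ)) * ↑hW.unit⁻¹ with hβ
  have hfil : ((Finset.range q).filter
      (fun j => ((uq q (q * m + j) : ℤ) + x) % (d : ℤ) = 0))
      = ((Finset.range q).filter (fun j => ((j:ℕ) : ZMod d) = β)) := by
    apply Finset.filter_congr
    intro j hj
    simp only [Finset.mem_range] at hj
    have hβW : β * W = -(u0 + ξ) := by
      rw [hβ, mul_assoc, IsUnit.val_inv_mul, mul_one]
    constructor
    · intro h
      have hdvd : (d : ℤ) ∣ ((uq q (q * m + j) : ℤ) + x) := Int.dvd_of_emod_eq_zero h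
      have hz : (((uq q (q * m + j) : ℤ) + x : ℤ) : ZMod d) = 0 := by
        rw [ZMod.intCast_zmod_eq_zero_iff_dvd]
        exact_mod_cast hdvd
      rw [uq_block hq hj] at hz
      push_cast at hz
      have hz2 : (j : ZMod d) * W = -(u0 + ξ) := by
        rw [hWdef, hu0, hξ]
        linear_combination hz
      have hjj : (j : ZMod d) * ↑hW.unit = β * ↑hW.unit := by
        rw [IsUnit.unit_spec hW, hz2, hβW]
      exact (Units.mul_left_inj _).mp hjj
    · intro h
      have hz2 : (j : ZMod d) * W = -(u0 + ξ) := by rw [h]; exact hβW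
      have hz : (((uq q (q * m + j) : ℤ) + x : ℤ) : ZMod d) = 0 := by
        rw [uq_block hq hj]
        push_cast
        rw [hWdef, hu0, hξ] at hz2
        linear_combination hz2
      rw [ZMod.intCast_zmod_eq_zero_iff_dvd] at hz
      have hdvd : ((d:ℕ) : ℤ) ∣ ((uq q (q * m + j) : ℤ) + x) := hz
      exact Int.emod_eq_zero_of_dvd hdvd
  rw [hfil]
  exact card_j_ge hq hd β

end dev4

section dev5

set_option linter.unusedSectionVars false

open scoped Classical

variable {q d : ℕ} (hq : 2 ≤ q) (hd : 2 ≤ d) [NeZero d]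

include hq hd

lemma count_ge_sum (x : ℤ) (K N : ℕ) :
    ∑ t ∈ Finset.range (N / q ^ (K+1)),
      (q / d) * ((Finset.range (q^K)).filter
        (fun mt => IsUnit ((wq q (q * (mt + q^K * t)) : ℕ) : ZMod d))).card
    ≤ ((Finset.range N).filter
        (fun n => ((uq q n : ℤ) + x) % (d : ℤ) = 0)).card := by
  set Q := q ^ (K+1) with hQ
  set T := N / Q with hT
  set good : ℕ → Prop := fun n => ((uq q n : ℤ) + x) % (d : ℤ) = 0 with hgood
  have step1 : ((Finset.range (Q * T)).filter good).card
      ≤ ((Finset.range N).filter good).card := by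
    apply Finset.card_le_card
    apply Finset.filter_subset_filter
    exact Finset.range_subset_range.mpr (Nat.mul_div_le N Q)
  have step2 : ((Finset.range (Q * T)).filter good).card
      = ∑ t ∈ Finset.range T, ((Finset.range Q).filter (fun s => good (Q * t + s))).card :=
    filter_mul_card Q good T
  have step3 : ∀ t, ((Finset.range Q).filter (fun s => good (Q * t + s))).card
      = ∑ mt ∈ Finset.range (q^K),
          ((Finset.range q).filter (fun j => good (Q * t + (q * mt + j)))).card := by
    intro t
    have hQ2 : Q = q * q ^ K := by rw [hQ, pow_succ]; ring
    rw [hQ2]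
    exact filter_mul_card q (fun s => good (q * q^K * t + s)) (q ^ K)
  have step4 : ∀ t mt, (q / d) * (if IsUnit ((wq q (q * (mt + q^K * t)) : ℕ) : ZMod d) then 1 else 0)
      ≤ ((Finset.range q).filter (fun j => good (Q * t + (q * mt + j)))).card := by
    intro t mt
    by_cases hu : IsUnit ((wq q (q * (mt + q^K * t)) : ℕ) : ZMod d)
    · rw [if_pos hu, mul_one]
      have harg : ∀ j, Q * t + (q * mt + j) = q * (mt + q^K * t) + j := by
        intro j; rw [hQ, pow_succ]; ring
      have : ((Finset.range q).filter (fun j => good (Q * t + (q * mt + j))))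
          = ((Finset.range q).filter
              (fun j => ((uq q (q * (mt + q^K * t) + j) : ℤ) + x) % (d : ℤ) = 0)) := by
        apply Finset.filter_congr
        intro j _
        rw [hgood]
        simp only [harg j]
      rw [this]
      exact block_count hq hd x hu
    · rw [if_neg hu, mul_zero]
      omega
  calc ∑ t ∈ Finset.range T,
      (q / d) * ((Finset.range (q^K)).filter
        (fun mt => IsUnit ((wq q (q * (mt + q^K * t)) : ℕ) : ZMod d))).card
      = ∑ t ∈ Finset.range T, ∑ mt ∈ Finset.range (q^K),
          (q / d) * (if IsUnit ((wq q (q * (mt + q^K * t)) : ℕ) : ZMod d) then 1 else 0) := by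
        apply Finset.sum_congr rfl
        intro t _
        rw [Finset.card_filter, Finset.mul_sum]
    _ ≤ ∑ t ∈ Finset.range T, ∑ mt ∈ Finset.range (q^K),
          ((Finset.range q).filter (fun j => good (Q * t + (q * mt + j)))).card := by
        apply Finset.sum_le_sum
        intro t _
        exact Finset.sum_le_sum (fun mt _ => step4 t mt)
    _ = ((Finset.range (Q * T)).filter good).card := by
        rw [step2]
        exact (Finset.sum_congr rfl (fun t _ => (step3 t).symm))
    _ ≤ _ := step1

lemma unit_count_ge (t : ℕ) {a P : ℕ} (hP : 0 < P)
    (hper : ∀ s, a ≤ s → tau q d (s + P) = tau q d s) (b : ℕ) :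
    (Nat.totient d : ℝ) * ((q:ℝ)^a *
        (((q:ℝ)^(2*P*(2*d)*b) - ((q:ℝ)^(2*P*(2*d)) - d)^b) / d))
      ≤ (((Finset.range (q^(a + 2*P*(2*d)*b))).filter
          (fun mt => IsUnit ((wq q (q * (mt + q^(a + 2*P*(2*d)*b) * t)) : ℕ) : ZMod d))).card
          : ℝ) := by
  set L := 2*P*(2*d) with hLdef
  set K := a + L*b with hK
  set C : ZMod d := phiSum q d K t t with hC
  set Eb : ℝ := ((q:ℝ)^(L*b) - ((q:ℝ)^L - d)^b) / d with hEb
  have hrw : ((Finset.range (q^K)).filter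
      (fun mt => IsUnit ((wq q (q * (mt + q^K * t)) : ℕ) : ZMod d)))
      = ((Finset.range (q^K)).filter
          (fun mt => IsUnit (phiSum q d 0 K mt + C))) := by
    apply Finset.filter_congr
    intro mt hmt
    simp only [Finset.mem_range] at hmt
    have ht : t < q ^ t := Nat.lt_pow_self (n := t) (by omega)
    have hlt : mt + q^K * t < q^(K + t) := by
      have h1 : mt + q^K * t < q^K * (t+1) := by
        have he : q^K * (t+1) = q^K * t + q^K := by ring
        omega
      have h2 : q^K * (t+1) ≤ q^K * q^t := Nat.mul_le_mul_left _ (by omega)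
      calc mt + q^K * t < q^K * (t+1) := h1
        _ ≤ q^K * q^t := h2
        _ = q^(K+t) := (pow_add q K t).symm
    have helem : ((wq q (q * (mt + q^K * t)) : ℕ) : ZMod d)
        = phiSum q d 0 K mt + C := by
      rw [phiSum_spec hq hd hlt, phiSum_split hq hmt, hC]
      simp only [zero_add]
    rw [helem]
  rw [hrw]
  set X := ((Finset.range (q^K)).filter
      (fun mt => IsUnit (phiSum q d 0 K mt + C))) with hX
  have hfib := Finset.card_eq_sum_card_fiberwise
    (f := fun mt => phiSum q d 0 K mt) (s := X)
    (t := (Finset.univ : Finset (ZMod d))) (fun y _ => Finset.mem_univ _)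
  have hXρ : ∀ ρ : ZMod d, (X.filter (fun mt => phiSum q d 0 K mt = ρ)).card
      = if IsUnit (ρ + C) then cnt q d 0 K ρ else 0 := by
    intro ρ
    rw [hX, Finset.filter_filter]
    by_cases hu : IsUnit (ρ + C)
    · rw [if_pos hu]
      unfold cnt
      congr 1
      apply Finset.filter_congr
      intro mt _
      constructor
      · exact fun h => h.2
      · exact fun h => ⟨by rw [h]; exact hu, h⟩
    · rw [if_neg hu, Finset.card_eq_zero, Finset.filter_eq_empty_iff]
      rintro mt _ ⟨h1, h2⟩
      rw [h2] at h1
      exact hu h1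
  have hXcard : (X.card : ℝ)
      = ∑ ρ ∈ Finset.univ.filter (fun ρ : ZMod d => IsUnit (ρ + C)),
          (cnt q d 0 K ρ : ℝ) := by
    rw [hfib]
    push_cast
    rw [Finset.sum_congr rfl (fun ρ _ => by rw [hXρ ρ])]
    simp only [apply_ite (Nat.cast : ℕ → ℝ), Nat.cast_zero]
    rw [← Finset.sum_filter]
  rw [hXcard]
  have hterm : ∀ ρ ∈ Finset.univ.filter (fun ρ : ZMod d => IsUnit (ρ + C)),
      (q:ℝ)^a * Eb ≤ (cnt q d 0 K ρ : ℝ) := by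
    intro ρ _
    have := cnt_full_ge hq hd hP hper b ρ
    push_cast at this ⊢
    convert this using 2
  calc (Nat.totient d : ℝ) * ((q:ℝ)^a * Eb)
      = ∑ _ρ ∈ Finset.univ.filter (fun ρ : ZMod d => IsUnit (ρ + C)),
          ((q:ℝ)^a * Eb) := by
        rw [Finset.sum_const, card_units_shift hd C, nsmul_eq_mul]
    _ ≤ _ := Finset.sum_le_sum hterm

end dev5

theorem stmt_13 (q d : ℕ) (hq : 2 ≤ q) (hd : 2 ≤ d) (x : ℤ) :
    (Nat.totient d : ℝ) / (d * q) * (q / d : ℕ) ≤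
      atTop.liminf
        (fun N : ℕ =>
          (((Finset.range N).filter fun n =>
              ((uq q n : ℤ) + x) % (d : ℤ) = 0).card : ℝ) / N) := by
  classical
  haveI : NeZero d := ⟨by omega⟩
  let f : ℕ → ℝ := fun N =>
    (((Finset.range N).filter fun n =>
        ((uq q n : ℤ) + x) % (d : ℤ) = 0).card : ℝ) / N
  show (Nat.totient d : ℝ) / (d * q) * (q / d : ℕ) ≤ atTop.liminf f
  set α : ℝ := (Nat.totient d : ℝ) / (d * q) * (q / d : ℕ) with hα
  have hα0 : 0 ≤ α := by
    rw [hα]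
    positivity
  have hbdd : Filter.IsBoundedUnder (· ≤ ·) atTop f := by
    apply Filter.isBoundedUnder_of
    refine ⟨1, fun N => ?_⟩
    show (((Finset.range N).filter fun n =>
        ((uq q n : ℤ) + x) % (d : ℤ) = 0).card : ℝ) / N ≤ 1
    rcases Nat.eq_zero_or_pos N with rfl | hN
    · simp
    · apply div_le_one_of_le₀
      · exact_mod_cast Nat.cast_le.mpr
          ((Finset.card_filter_le _ _).trans (Finset.card_range N).le)
      · positivity
  have hcob : Filter.IsCoboundedUnder (· ≥ ·) atTop f := hbdd.isCoboundedUnder_ge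
  have key : ∀ ε : ℝ, 0 < ε → α - ε ≤ atTop.liminf f := by
    intro ε hε
    apply Filter.le_liminf_of_le hcob
    obtain ⟨a, P, hP, hper⟩ := tau_exists_period hq hd
    set L : ℕ := 2*P*(2*d) with hL
    have hd0 : (0:ℝ) < d := by positivity
    have hq0 : (0:ℝ) < q := by positivity
    have hqL : (0:ℝ) < (q:ℝ)^L := by positivity
    have hdL : (d:ℝ) ≤ (q:ℝ)^L := by exact_mod_cast d_le_pow hq hd hP
    set θ : ℝ := ((q:ℝ)^L - d)/(q:ℝ)^L with hθ
    have hθ0 : 0 ≤ θ := by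
      rw [hθ]
      apply div_nonneg (by linarith) (by linarith)
    have hθ1 : θ < 1 := by
      rw [hθ, div_lt_one hqL]
      linarith
    obtain ⟨b, hb⟩ := exists_pow_lt_of_lt_one
      (show (0:ℝ) < ε/(2*(α+1)) by positivity) hθ1
    set K : ℕ := a + L*b with hK
    set Qn : ℕ := q^(K+1) with hQn
    have hQn0 : (0:ℝ) < (Qn:ℕ) := by positivity
    set Eb : ℝ := ((q:ℝ)^(L*b) - ((q:ℝ)^L - d)^b)/d with hEb
    have hEb0 : 0 ≤ Eb := by
      rw [hEb]
      apply div_nonneg _ (by linarith)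
      have h1 : ((q:ℝ)^L - d)^b ≤ ((q:ℝ)^L)^b :=
        pow_le_pow_left₀ (by linarith) (by linarith) b
      rw [← pow_mul] at h1
      linarith
    set c : ℝ := ((q/d : ℕ):ℝ) * (Nat.totient d : ℝ) * ((q:ℝ)^a * Eb) with hc
    have hc0 : 0 ≤ c := by
      rw [hc]
      positivity
    have hident : c = α * (1 - θ^b) * (Qn:ℕ) := by
      rw [hc, hα, hEb, hθ, hQn, div_pow, hK]
      push_cast
      rw [pow_add, pow_add, pow_succ, pow_mul]
      field_simp
    have hmain : ∀ N : ℕ, ((N / Qn : ℕ) : ℝ) * c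
        ≤ (((Finset.range N).filter fun n =>
            ((uq q n : ℤ) + x) % (d : ℤ) = 0).card : ℝ) := by
      intro N
      have h1 := count_ge_sum hq hd x K N
      calc ((N / Qn : ℕ) : ℝ) * c
          = ∑ _t ∈ Finset.range (N / Qn), c := by
            rw [Finset.sum_const, nsmul_eq_mul, Finset.card_range]
        _ ≤ ∑ t ∈ Finset.range (N / Qn),
            ((q/d : ℕ):ℝ) * (((Finset.range (q^K)).filter
              (fun mt => IsUnit ((wq q (q * (mt + q^K * t)) : ℕ) : ZMod d))).card : ℝ) := by
            apply Finset.sum_le_sum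
            intro t _
            rw [hc, mul_assoc]
            apply mul_le_mul_of_nonneg_left _ (by positivity)
            exact unit_count_ge hq hd t hP hper b
        _ = ((∑ t ∈ Finset.range (N / Qn),
              (q / d) * ((Finset.range (q^K)).filter
                (fun mt => IsUnit ((wq q (q * (mt + q^K * t)) : ℕ) : ZMod d))).card : ℕ) : ℝ) := by
            push_cast
            ring
        _ ≤ _ := Nat.cast_le.mpr h1
    have hten : Filter.Tendsto (fun N : ℕ => c/(N:ℝ)) atTop (nhds 0) :=
      tendsto_const_div_atTop_nhds_zero_nat c
    have hev1 : ∀ᶠ N : ℕ in atTop, c/(N:ℝ) < ε/2 :=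
      hten.eventually_lt_const (by positivity)
    have hev2 : ∀ᶠ N : ℕ in atTop, Qn ≤ N := Filter.eventually_ge_atTop Qn
    filter_upwards [hev1, hev2] with N h1 h2
    have hN0 : (0:ℝ) < N := by
      have : 0 < Qn := by positivity
      have : 0 < N := by omega
      exact_mod_cast this
    set T : ℕ := N / Qn with hT
    have hTge : ((N:ℝ)/Qn - 1) ≤ (T:ℝ) := by
      have hQnpos : 0 < Qn := by positivity
      have hmod := Nat.div_add_mod N Qn
      have hmlt : N % Qn < Qn := Nat.mod_lt N hQnpos
      have hlt : (N:ℝ) < (Qn:ℝ) * ((T:ℝ) + 1) := by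
        have hnat : N < Qn * (T + 1) := by
          have he : Qn * (T + 1) = Qn * T + Qn := by ring
          rw [hT] at *
          omega
        exact_mod_cast hnat
      rw [sub_le_iff_le_add, div_le_iff₀ hQn0]
      linarith
    have step1 : ((N:ℝ)/Qn - 1) * c ≤ (T:ℝ) * c :=
      mul_le_mul_of_nonneg_right hTge hc0
    have step2 : (T:ℝ) * c ≤ (((Finset.range N).filter fun n =>
        ((uq q n : ℤ) + x) % (d : ℤ) = 0).card : ℝ) := hmain N
    have step3 : ((N:ℝ)/Qn - 1) * c / N = c/Qn - c/N := by
      field_simp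
    have step4 : c/(Qn:ℝ) = α * (1 - θ^b) := by
      rw [hident, mul_div_assoc, div_self (ne_of_gt hQn0), mul_one]
    have hθb0 : 0 ≤ θ^b := pow_nonneg hθ0 b
    have hθbe : (α+1) * θ^b < ε/2 := by
      have h3 : (α+1) * θ^b < (α+1) * (ε/(2*(α+1))) :=
        mul_lt_mul_of_pos_left hb (by linarith)
      have h4 : (α+1) * (ε/(2*(α+1))) = ε/2 := by
        field_simp
      linarith
    show α - ε ≤ f N
    show α - ε ≤ (((Finset.range N).filter fun n =>
        ((uq q n : ℤ) + x) % (d : ℤ) = 0).card : ℝ) / N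
    have hfN : α - ε ≤ (((Finset.range N).filter fun n =>
        ((uq q n : ℤ) + x) % (d : ℤ) = 0).card : ℝ) / N := by
      have hdivle : ((N:ℝ)/Qn - 1) * c / N
          ≤ (((Finset.range N).filter fun n =>
              ((uq q n : ℤ) + x) % (d : ℤ) = 0).card : ℝ) / N := by
        apply (div_le_div_iff_of_pos_right hN0).mpr
        linarith
      rw [step3] at hdivle
      rw [step4] at hdivle
      have hαθ : α * θ^b ≤ (α+1) * θ^b :=
        mul_le_mul_of_nonneg_right (by linarith) hθb0
      calc α - ε ≤ α * (1 - θ^b) - c/(N:ℝ) := by linarith [h1, hθbe, hαθ]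
        _ ≤ _ := hdivle
    exact hfN
  by_contra hcon
  push_neg at hcon
  have := key ((α - atTop.liminf f)/2) (by linarith)
  linarith

-- consistency check: the statement elaborates identically without `Classical`
example (q d : ℕ) (hq : 2 ≤ q) (hd : 2 ≤ d) (x : ℤ) :
    (Nat.totient d : ℝ) / (d * q) * (q / d : ℕ) ≤
      atTop.liminf
        (fun N : ℕ =>
          (((Finset.range N).filter fun n =>
              ((uq q n : ℤ) + x) % (d : ℤ) = 0).card : ℝ) / N) := stmt_13 q d hq hd x
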